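/- Let μ be a contingent stable matching (under either absolute or partial priorities) and c a school. If a family f with |f| ≥ 2 has some member s with μ(s) = c and another member s' ∈ f \ {s} with μ(s') weakly less preferred by s' than c, then f has at least one member matched to c who satisfies the conditions of an effective priority provider at c: namely, a member a with μ(a)=c such that the number of students in level ℓ(a) with strictly higher initial priority at c than a who weakly prefer c to their own match is at most q_c^{ℓ(a)} − 1. -/
import Mathlib


open scoped Classical

/-- A many-to-one matching market with levels, families, priority groups and
random tie-breakers, as in "Stable Matching with Contingent Priorities". -/
structure Market where
  Student : Type
  School : Type
  Level : Type
  [instFinS : Fintype Student]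
  [instDecS : DecidableEq Student]
  [instFinC : Fintype School]
  [instDecC : DecidableEq School]
  [instFinL : Fintype Level]
  [instDecL : DecidableEq Level]
  level : Student → Level
  sameFamily : Student → Student → Prop
  fam_refl : ∀ s, sameFamily s s
  fam_symm : ∀ s s', sameFamily s s' → sameFamily s' s
  fam_trans : ∀ s s' s'', sameFamily s s' → sameFamily s' s'' → sameFamily s s''
  cap : School → Level → ℕ
  /-- strict preference of each student over schools plus the outside option `none` -/
  pref : Student → Option School → Option School → Prop
  pref_irrefl : ∀ s o, ¬ pref s o o
  pref_trans : ∀ s o₁ o₂ o₃, pref s o₁ o₂ → pref s o₂ o₃ → pref s o₁ o₃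
  pref_total : ∀ s o o', o ≠ o' → pref s o o' ∨ pref s o' o
  nGroups : ℕ
  nGroups_pos : 1 ≤ nGroups
  group : Student → School → ℕ
  group_pos : ∀ s c, 1 ≤ group s c
  group_le : ∀ s c, group s c ≤ nGroups
  /-- random tie-breakers (smaller is better) -/
  tb : Student → School → ℝ
  tb_distinct : ∀ c s s', s ≠ s' → tb s c ≠ tb s' c

attribute [instance] Market.instFinS Market.instDecS Market.instFinC
  Market.instDecC Market.instFinL Market.instDecL

namespace Market

variable (M : Market)

/-- `s` weakly prefers `o` to `o'`. -/
def wPref (s : M.Student) (o o' : Option M.School) : Prop :=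
  o = o' ∨ M.pref s o o'

/-- A feasible matching: every assigned student finds their school acceptable and the
school offers seats at their level, and per-level capacities are respected. -/
def IsMatching (μ : M.Student → Option M.School) : Prop :=
  (∀ s c, μ s = some c → M.pref s (some c) none ∧ 0 < M.cap c (M.level s)) ∧
  (∀ c ℓ, (Finset.univ.filter fun s => μ s = some c ∧ M.level s = ℓ).card ≤ M.cap c ℓ)

/-- Number of students of level `ℓ` assigned to `c`. -/
noncomputable def assignedCount (μ : M.Student → Option M.School) (c : M.School)
    (ℓ : M.Level) : ℕ :=
  (Finset.univ.filter fun s => μ s = some c ∧ M.level s = ℓ).card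

/-- Non-wastefulness. -/
def NonWasteful (μ : M.Student → Option M.School) : Prop :=
  ¬ ∃ s c, M.pref s (some c) (μ s) ∧
    M.assignedCount μ c (M.level s) < M.cap c (M.level s)

/-- Initial priority order at school `c` (groups first, tie-breakers second). -/
def initPrio (c : M.School) (s s' : M.Student) : Prop :=
  M.group s c < M.group s' c ∨ (M.group s c = M.group s' c ∧ M.tb s c < M.tb s' c)

/-- Initial stability. -/
def InitStable (μ : M.Student → Option M.School) : Prop :=
  M.IsMatching μ ∧ M.NonWasteful μ ∧
  ¬ ∃ s s' c, μ s' = some c ∧ M.level s = M.level s' ∧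
      M.pref s (some c) (μ s) ∧ M.initPrio c s s'

/-- Number of students of `s`'s level with strictly higher initial priority at `c`
who weakly prefer `c` to their match. -/
noncomputable def rivalCount (μ : M.Student → Option M.School) (s : M.Student)
    (c : M.School) : ℕ :=
  (Finset.univ.filter fun s'' => M.level s'' = M.level s ∧ M.initPrio c s'' s ∧
    M.wPref s'' (some c) (μ s'')).card

/-- `s` provides contingent priority at `c` (Definition 2, refined). -/
def Provides (μ : M.Student → Option M.School) (s : M.Student) (c : M.School) : Prop :=
  μ s = some c ∧
  (∃ s', s' ≠ s ∧ M.sameFamily s s' ∧ M.wPref s' (some c) (μ s')) ∧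
  M.rivalCount μ s c < M.cap c (M.level s)

/-- `s` is the effective priority provider of their family at `c`: the provider with
the most favorable tie-breaker. -/
def EffProvider (μ : M.Student → Option M.School) (s : M.Student) (c : M.School) : Prop :=
  M.Provides μ s c ∧
  ∀ s', s' ≠ s → M.sameFamily s s' → M.Provides μ s' c → M.tb s c < M.tb s' c

/-- Contingent group under absolute priorities. -/
noncomputable def absGroup (μ : M.Student → Option M.School) (s : M.Student)
    (c : M.School) : ℕ :=
  if M.group s c < M.nGroups ∨
      (M.EffProvider μ s c ∧ ∃ s', s' ≠ s ∧ M.sameFamily s s' ∧ μ s' = some c) ∨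
      (∃ s', s' ≠ s ∧ M.sameFamily s s' ∧ M.EffProvider μ s' c)
  then M.group s c else M.nGroups + 1

/-- Contingent priority order under absolute priorities. -/
noncomputable def absPrio (μ : M.Student → Option M.School) (c : M.School)
    (s s' : M.Student) : Prop :=
  M.absGroup μ s c < M.absGroup μ s' c ∨
  (M.absGroup μ s c = M.absGroup μ s' c ∧ M.tb s c < M.tb s' c)

/-- Contingent stability under absolute priorities. -/
def AbsStable (μ : M.Student → Option M.School) : Prop :=
  M.IsMatching μ ∧ M.NonWasteful μ ∧
  ¬ ∃ s s' c, μ s' = some c ∧ M.level s = M.level s' ∧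
      M.pref s (some c) (μ s) ∧ M.absPrio μ c s s'

/-- Contingent tie-breaker under partial priorities: a no-priority student inherits
their effective provider's tie-breaker when it is more favorable. -/
noncomputable def partialTb (μ : M.Student → Option M.School) (s : M.Student)
    (c : M.School) : ℝ :=
  if h : M.group s c = M.nGroups ∧ ¬ M.EffProvider μ s c ∧
      ∃ s', s' ≠ s ∧ M.sameFamily s s' ∧ M.EffProvider μ s' c ∧ M.tb s' c < M.tb s c
  then M.tb h.2.2.choose c
  else M.tb s c

/-- Contingent priority order under partial priorities: groups unchanged, contingent
tie-breakers first, with residual ties (within a family) broken by the initial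
tie-breakers (the ε-perturbation of Definition 5). -/
noncomputable def partialPrio (μ : M.Student → Option M.School) (c : M.School)
    (s s' : M.Student) : Prop :=
  M.group s c < M.group s' c ∨
  (M.group s c = M.group s' c ∧
    (M.partialTb μ s c < M.partialTb μ s' c ∨
      (M.partialTb μ s c = M.partialTb μ s' c ∧ M.tb s c < M.tb s' c)))

/-- Contingent stability under partial priorities. -/
def PartialStable (μ : M.Student → Option M.School) : Prop :=
  M.IsMatching μ ∧ M.NonWasteful μ ∧
  ¬ ∃ s s' c, μ s' = some c ∧ M.level s = M.level s' ∧
      M.pref s (some c) (μ s) ∧ M.partialPrio μ c s s'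

/-- Tie-breakers are at the family level: members of a family compare the same way
against any student outside the family. -/
def FamilyTB : Prop :=
  ∀ c (s s' a : M.Student), M.sameFamily s s' → ¬ M.sameFamily s a →
    (M.tb s c < M.tb a c ↔ M.tb s' c < M.tb a c)

/-- Size of the family of `s`. -/
noncomputable def famSize (s : M.Student) : ℕ :=
  (Finset.univ.filter fun s' => M.sameFamily s s').card

/-- Number of families in the market. -/
noncomputable def numFamilies : ℕ :=
  (Finset.univ.image fun s : M.Student =>
    Finset.univ.filter fun s' => M.sameFamily s s').card

/-- Rank of an outcome in a student's preference list (`none` gets rank `|≻ₛ|+1`,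
the penalty for being unassigned). -/
noncomputable def rankVal (s : M.Student) (o : Option M.School) : ℕ :=
  (Finset.univ.filter fun c : M.School => M.pref s (some c) o).card + 1

/-- Total rank objective of a matching. -/
noncomputable def cost (μ : M.Student → Option M.School) : ℕ :=
  ∑ s, M.rankVal s (μ s)

/-- Rank-optimal contingent stable matching under absolute priorities. -/
def RankOptAbs (μ : M.Student → Option M.School) : Prop :=
  M.AbsStable μ ∧ ∀ μ', M.AbsStable μ' → M.cost μ ≤ M.cost μ'

/-- Rank-optimal contingent stable matching under partial priorities. -/
def RankOptPartial (μ : M.Student → Option M.School) : Prop :=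
  M.PartialStable μ ∧ ∀ μ', M.PartialStable μ' → M.cost μ ≤ M.cost μ'

end Market

/-- In any contingent stable matching (absolute or partial), if a
family has a member s matched to c and another member s' who weakly prefers c to
their own match, then the family has a member matched to c who satisfies the
effective-provider seat-claiming condition at c. -/
lemma Market.partialTb_le (M : Market) (μ : M.Student → Option M.School)
    (a : M.Student) (c : M.School) : M.partialTb μ a c ≤ M.tb a c := by
  rw [Market.partialTb]
  split
  · next h => exact le_of_lt h.2.2.choose_spec.2.2.2
  · exact le_refl _

theorem exists_provider_in_stable (M : Market) (μ : M.Student → Option M.School)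
    (hstab : M.AbsStable μ ∨ M.PartialStable μ) (c : M.School)
    (s s' : M.Student) (hne : s' ≠ s) (hfam : M.sameFamily s s')
    (hs : μ s = some c) (hs' : M.wPref s' (some c) (μ s')) :
    ∃ a, M.sameFamily s a ∧ μ a = some c ∧
      M.rivalCount μ a c < M.cap c (M.level a) := by
  by_cases hlt : M.rivalCount μ s c < M.cap c (M.level s)
  · exact ⟨s, M.fam_refl s, hs, hlt⟩
  push_neg at hlt
  have hmatch : M.IsMatching μ := hstab.elim (·.1) (·.1)
  -- There is a rival of `s` at `c` who strictly prefers `c` to their match.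
  have hex : ∃ t, M.level t = M.level s ∧ M.initPrio c t s ∧ M.pref t (some c) (μ t) := by
    by_contra h
    push_neg at h
    have hsub : (Finset.univ.filter fun t => M.level t = M.level s ∧ M.initPrio c t s ∧
        M.wPref t (some c) (μ t)) ⊆
        (Finset.univ.filter fun t => μ t = some c ∧ M.level t = M.level s).erase s := by
      intro t ht
      simp only [Finset.mem_filter, Finset.mem_univ, true_and] at ht
      have hmu : μ t = some c := by
        rcases ht.2.2 with h1 | h1
        · exact h1.symm
        · exact absurd h1 (h t ht.1 ht.2.1)
      have hts : t ≠ s := by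
        rintro rfl
        rcases ht.2.1 with h1 | h1
        · exact lt_irrefl _ h1
        · exact lt_irrefl _ h1.2
      simp only [Finset.mem_erase, Finset.mem_filter, Finset.mem_univ, true_and]
      exact ⟨hts, hmu, ht.1⟩
    have h1 := Finset.card_le_card hsub
    have h2 : s ∈ (Finset.univ.filter fun t => μ t = some c ∧ M.level t = M.level s) := by
      simp [hs]
    have h3 := Finset.card_erase_lt_of_mem h2
    have h4 := hmatch.2 c (M.level s)
    rw [Market.rivalCount] at hlt
    omega
  obtain ⟨t, hlev, hprio, hpref⟩ := hex
  rcases hstab with habs | hpar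
  · -- absolute priorities
    have hnb : ¬ M.absPrio μ c t s := fun hp => habs.2.2 ⟨t, s, c, hs, hlev, hpref, hp⟩
    have hAs_ge : M.group s c ≤ M.absGroup μ s c := by
      rw [Market.absGroup]
      split_ifs
      · exact le_refl _
      · have := M.group_le s c; omega
    rcases hprio with hg | ⟨hg, htb⟩
    · exfalso
      apply hnb
      left
      have h1 : M.absGroup μ t c = M.group t c := by
        rw [Market.absGroup, if_pos]
        exact Or.inl (lt_of_lt_of_le hg (M.group_le s c))
      omega
    · by_cases hcs : M.group s c < M.nGroups ∨
          (M.EffProvider μ s c ∧ ∃ s₀, s₀ ≠ s ∧ M.sameFamily s s₀ ∧ μ s₀ = some c) ∨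
          (∃ s₀, s₀ ≠ s ∧ M.sameFamily s s₀ ∧ M.EffProvider μ s₀ c)
      · have hAs : M.absGroup μ s c = M.group s c := by
          rw [Market.absGroup, if_pos hcs]
        by_cases hct : M.group t c < M.nGroups ∨
            (M.EffProvider μ t c ∧ ∃ s₀, s₀ ≠ t ∧ M.sameFamily t s₀ ∧ μ s₀ = some c) ∨
            (∃ s₀, s₀ ≠ t ∧ M.sameFamily t s₀ ∧ M.EffProvider μ s₀ c)
        · have hAt : M.absGroup μ t c = M.group t c := by
            rw [Market.absGroup, if_pos hct]
          exact absurd (Or.inr ⟨by rw [hAt, hAs, hg], htb⟩) hnb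
        · push_neg at hct
          have hgt : M.group t c = M.nGroups :=
            le_antisymm (M.group_le t c) hct.1
          rcases hcs with hcs | hcs | hcs
          · omega
          · exact absurd hcs.1.1.2.2 (not_lt.mpr hlt)
          · obtain ⟨s₀, hne₀, hfam₀, heff₀⟩ := hcs
            exact ⟨s₀, hfam₀, heff₀.1.1, heff₀.1.2.2⟩
      · exfalso
        apply hnb
        have hAs : M.absGroup μ s c = M.nGroups + 1 := by
          rw [Market.absGroup, if_neg hcs]
        have hAt_le : M.absGroup μ t c ≤ M.nGroups + 1 := by
          rw [Market.absGroup]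
          split_ifs
          · have := M.group_le t c; omega
          · exact le_refl _
        rcases lt_or_eq_of_le hAt_le with h | h
        · left; omega
        · right; exact ⟨by rw [h, hAs], htb⟩
  · -- partial priorities
    have hnb : ¬ M.partialPrio μ c t s := fun hp => hpar.2.2 ⟨t, s, c, hs, hlev, hpref, hp⟩
    rcases hprio with hg | ⟨hg, htb⟩
    · exact absurd (Or.inl hg) hnb
    · have hne' : M.partialTb μ t c ≠ M.partialTb μ s c :=
        fun h => hnb (Or.inr ⟨hg, Or.inr ⟨h, htb⟩⟩)
      have hnlt : ¬ M.partialTb μ t c < M.partialTb μ s c :=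
        fun h => hnb (Or.inr ⟨hg, Or.inl h⟩)
      have hgt2 : M.partialTb μ s c < M.partialTb μ t c :=
        lt_of_le_of_ne (not_lt.mp hnlt) (Ne.symm hne')
      have hlt2 : M.partialTb μ s c < M.tb s c :=
        ((lt_of_lt_of_le hgt2 (M.partialTb_le μ t c)).trans htb)
      by_cases hcs : M.group s c = M.nGroups ∧ ¬ M.EffProvider μ s c ∧
          ∃ s₀, s₀ ≠ s ∧ M.sameFamily s s₀ ∧ M.EffProvider μ s₀ c ∧ M.tb s₀ c < M.tb s c
      · obtain ⟨_, _, s₀, hne₀, hfam₀, heff₀, _⟩ := hcs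
        exact ⟨s₀, hfam₀, heff₀.1.1, heff₀.1.2.2⟩
      · rw [Market.partialTb, dif_neg hcs] at hlt2
        exact absurd hlt2 (lt_irrefl _)
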